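/- Let x* be a feasible LP solution, C = {narrow cuts} a family of cuts each intersected by every s-t-path, and let S be a spanning tree with s-t-path I_S. Fix 0 ≤ β ≤ 1/2, and let z^S ∈ ℝ^E_{≥0} satisfy z^S(C) ≥ β(2 − x*(C)) for all narrow cuts C with |S ∩ C| even. Define y^S := β x* + (1−2β) χ^{J_S} + z^S, where J_S = S \ I_S. Then for every T_S-cut C we have y^S(C) ≥ 1. -/
import Mathlib


open Finset

noncomputable def cut {V : Type*} [Fintype V] [DecidableEq V] (U : Finset V) :
    Finset (Sym2 V) :=
  Finset.univ.filter (fun e => ∃ u v : V, e = s(u, v) ∧ u ∈ U ∧ v ∉ U)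

def IsSpanningTree {V : Type*} [Fintype V] (S : Finset (Sym2 V)) : Prop :=
  (SimpleGraph.fromEdgeSet (↑S : Set (Sym2 V))).IsTree ∧ ∀ e ∈ S, ¬ e.IsDiag

section Aux

variable {V : Type*} [Fintype V] [DecidableEq V]

lemma mem_cut_iff (U : Finset V) (a b : V) :
    s(a,b) ∈ cut U ↔ ((a ∈ U ∧ b ∉ U) ∨ (b ∈ U ∧ a ∉ U)) := by
  simp only [cut, Finset.mem_filter, Finset.mem_univ, true_and]
  constructor
  · rintro ⟨u, v, h, hu, hv⟩
    rw [Sym2.eq_iff] at h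
    rcases h with ⟨rfl, rfl⟩ | ⟨rfl, rfl⟩ <;> tauto
  · rintro (⟨ha, hb⟩ | ⟨hb, ha⟩)
    · exact ⟨a, b, rfl, ha, hb⟩
    · exact ⟨b, a, Sym2.eq_swap.symm, hb, ha⟩

lemma zmod2_one_iff (n : ℕ) : (n : ZMod 2) = 1 ↔ Odd n := by
  have h := (ZMod.natCast_mod n 2).symm
  rw [Nat.odd_iff]
  constructor
  · intro hn
    by_contra hc
    have h0 : n % 2 = 0 := by omega
    rw [h, h0] at hn; simp at hn
  · intro hn; rw [h, hn]; simp

lemma zmod2_zero_iff (n : ℕ) : (n : ZMod 2) = 0 ↔ Even n := by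
  have h := (ZMod.natCast_mod n 2).symm
  rw [Nat.even_iff]
  constructor
  · intro hn
    by_contra hc
    have h0 : n % 2 = 1 := by omega
    rw [h, h0] at hn; simp at hn
  · intro hn; rw [h, hn]; simp

lemma edge_indicator (U : Finset V) (e : Sym2 V) :
    ((if e ∈ cut U then 1 else 0 : ZMod 2)) =
      ((U.filter (fun v => e ∈ cut {v})).card : ZMod 2) := by
  induction e using Sym2.inductionOn with
  | hf a b =>
    by_cases hab : a = b
    · subst hab
      have h1 : ∀ X : Finset V, s(a,a) ∉ cut X := by
        intro X hX
        rw [mem_cut_iff] at hX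
        tauto
      have h2 : U.filter (fun v => s(a,a) ∈ cut {v}) = ∅ := by
        apply Finset.filter_false_of_mem
        intro v _
        exact h1 _
      rw [h2]
      simp [h1 U]
    · have hcond : ∀ v ∈ U, (s(a,b) ∈ cut {v}) ↔ (v = a ∨ v = b) := by
        intro v _
        rw [mem_cut_iff]
        simp only [Finset.mem_singleton]
        constructor
        · rintro (⟨h1, h2⟩ | ⟨h1, h2⟩) <;> tauto
        · rintro (rfl | rfl)
          · exact Or.inl ⟨rfl, fun h => hab h.symm⟩
          · exact Or.inr ⟨rfl, fun h => hab h⟩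
      rw [Finset.filter_congr hcond, Finset.filter_or, Finset.filter_eq', Finset.filter_eq']
      by_cases ha : a ∈ U <;> by_cases hb : b ∈ U <;>
        simp [ha, hb, mem_cut_iff, hab, Finset.card_union_of_disjoint,
          Finset.disjoint_singleton, Ne.symm hab] <;> decide

lemma handshake (F : Finset (Sym2 V)) (U : Finset V) :
    (((F ∩ cut U).card : ZMod 2)) = ∑ v ∈ U, ((cut {v} ∩ F).card : ZMod 2) := by
  have h1 : F ∩ cut U = F.filter (· ∈ cut U) := (Finset.filter_mem_eq_inter).symm
  have h2 : ∀ v : V, cut {v} ∩ F = F.filter (· ∈ cut {v}) := by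
    intro v; rw [Finset.inter_comm]; exact (Finset.filter_mem_eq_inter).symm
  rw [h1]
  simp only [h2]
  rw [Finset.card_filter]
  push_cast
  have step : ∀ e ∈ F, ((if e ∈ cut U then 1 else 0 : ZMod 2)) =
      ∑ v ∈ U, (if e ∈ cut {v} then 1 else 0 : ZMod 2) := by
    intro e _
    rw [edge_indicator, Finset.card_filter]
    push_cast
    rfl
  rw [Finset.sum_congr rfl step, Finset.sum_comm]
  apply Finset.sum_congr rfl
  intro v _
  rw [Finset.card_filter]
  push_cast
  rfl

lemma walk_parity {G : SimpleGraph V} {a b : V} (p : G.Walk a b) (U : Finset V) :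
    ((p.edges.countP (fun e => e ∈ cut U)) : ZMod 2) =
      (if a ∈ U then 1 else 0) + (if b ∈ U then 1 else 0) := by
  induction p with
  | nil =>
    simp only [SimpleGraph.Walk.edges_nil, List.countP_nil, Nat.cast_zero]
    split_ifs <;> decide
  | @cons u v w h q ih =>
    have huv : u ≠ v := h.ne
    simp only [SimpleGraph.Walk.edges_cons, List.countP_cons]
    push_cast
    rw [ih]
    simp only [decide_eq_true_eq]
    have : ((if s(u,v) ∈ cut U then 1 else 0 : ZMod 2)) =
        (if u ∈ U then 1 else 0) + (if v ∈ U then 1 else 0) := by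
      by_cases hu : u ∈ U <;> by_cases hv : v ∈ U <;>
        simp only [mem_cut_iff, hu, hv, if_true, if_false, not_true, not_false_iff,
          and_true, and_false, true_and, false_and, or_false, false_or, or_self,
          if_pos, if_neg] <;> first | decide | (rw [if_pos (by tauto)] ; decide) | (rw [if_neg (by tauto)] ; decide)
    rw [this]
    have two : (if v ∈ U then (1:ZMod 2) else 0) + (if v ∈ U then 1 else 0) = 0 := by
      split_ifs <;> decide
    linear_combination two

lemma nodup_inter_card {l : List (Sym2 V)} (hl : l.Nodup) (A : Finset (Sym2 V)) :
    (l.toFinset ∩ A).card = l.countP (fun e => e ∈ A) := by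
  have h1 : l.toFinset ∩ A = (l.filter (fun e => e ∈ A)).toFinset := by
    ext e
    simp [List.mem_filter]
  rw [h1, List.toFinset_card_of_nodup (hl.filter _), ← List.countP_eq_length_filter]


end Aux

/-- The correction vector y^S = β x* + (1-2β) χ^{J_S} + z^S is in the
T_S-join polyhedron: it has value at least 1 on every T_S-cut. -/
theorem correction_vector_feasible {V : Type*} [Fintype V] [DecidableEq V]
    (s t : V) (hst : s ≠ t)
    (x : Sym2 V → ℝ) (hx0 : ∀ e, 0 ≤ x e)
    (heven : ∀ U : Finset V, U.Nonempty → U ≠ Finset.univ →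
      ((s ∈ U) ↔ (t ∈ U)) → 2 ≤ ∑ e ∈ cut U, x e)
    (S I : Finset (Sym2 V)) (hS : IsSpanningTree S)
    (P : (SimpleGraph.fromEdgeSet (↑S : Set (Sym2 V))).Walk s t) (hP : P.IsPath)
    (hI : I = P.edges.toFinset)
    (β : ℝ) (hβ0 : 0 ≤ β) (hβ2 : β ≤ 1/2)
    (z : Sym2 V → ℝ) (hz0 : ∀ e, 0 ≤ z e)
    (hz : ∀ U : Finset V, U.Nonempty → U ≠ Finset.univ →
      (∑ e ∈ cut U, x e) < 2 → Even ((S ∩ cut U).card) →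
      β * (2 - ∑ e ∈ cut U, x e) ≤ ∑ e ∈ cut U, z e) :
    ∀ U : Finset V, U.Nonempty → U ≠ Finset.univ →
      Odd ((U ∩ Finset.univ.filter
        (fun v => (v = s ∨ v = t) ↔ Even ((cut {v} ∩ S).card))).card) →
      1 ≤ ∑ e ∈ cut U,
        (β * x e + (1 - 2*β) * (if e ∈ S \ I then 1 else 0) + z e) := by
  intro U hUne hUuniv hodd
  set J : Finset (Sym2 V) := S \ I with hJ
  have hPnodup : P.edges.Nodup := hP.isTrail.edges_nodup
  -- I ⊆ S
  have hIS : I ⊆ S := by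
    rw [hI]
    intro e he
    rw [List.mem_toFinset] at he
    have := P.edges_subset_edgeSet he
    rw [SimpleGraph.edgeSet_fromEdgeSet] at this
    exact this.1
  -- splitting cards
  have hsplit : ∀ A : Finset (Sym2 V), (A ∩ S).card = (A ∩ I).card + (A ∩ J).card := by
    intro A
    have h1 : A ∩ S = (A ∩ I) ∪ (A ∩ J) := by
      rw [← Finset.inter_union_distrib_left, Finset.union_sdiff_of_subset hIS]
    rw [h1, Finset.card_union_of_disjoint]
    exact Finset.disjoint_of_subset_left Finset.inter_subset_right
      (Finset.disjoint_of_subset_right Finset.inter_subset_right Finset.sdiff_disjoint.symm)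
  -- parity of I on a cut
  have hIcut : ∀ W : Finset V, (((I ∩ cut W).card : ZMod 2)) =
      (if s ∈ W then 1 else 0) + (if t ∈ W then 1 else 0) := by
    intro W
    rw [hI, nodup_inter_card hPnodup, walk_parity]
  -- parity of J on cut U
  have hJcut : ((J ∩ cut U).card : ZMod 2) = 1 := by
    rw [handshake]
    have step : ∀ v ∈ U, ((cut {v} ∩ J).card : ZMod 2) =
        (if (v = s ∨ v = t) ↔ Even ((cut {v} ∩ S).card) then 1 else 0) := by
      intro v _
      have hd : ((cut {v} ∩ S).card : ZMod 2) =
          ((cut {v} ∩ I).card : ZMod 2) + ((cut {v} ∩ J).card : ZMod 2) := by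
        have := hsplit (cut {v})
        exact_mod_cast congrArg (Nat.cast : ℕ → ZMod 2) this
      have hdI : ((cut {v} ∩ I).card : ZMod 2) =
          (if v = s then 1 else 0) + (if v = t then 1 else 0) := by
        rw [Finset.inter_comm, hIcut]
        congr 1 <;> simp [Finset.mem_singleton, eq_comm]
      have two : (2 : ZMod 2) = 0 := by decide
      by_cases hvst : v = s ∨ v = t
      · have h1 : ((cut {v} ∩ I).card : ZMod 2) = 1 := by
          rcases hvst with rfl | rfl
          · rw [hdI, if_pos rfl, if_neg hst]; ring
          · rw [hdI, if_neg (Ne.symm hst), if_pos rfl]; ring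
        by_cases hEv : Even ((cut {v} ∩ S).card)
        · have h0 : ((cut {v} ∩ S).card : ZMod 2) = 0 := (zmod2_zero_iff _).2 hEv
          rw [if_pos (by tauto)]
          have := hd
          rw [h0, h1] at this
          have hJv : ((cut {v} ∩ J).card : ZMod 2) = -1 := by linear_combination -this
          rw [hJv]; decide
        · have h0 : ((cut {v} ∩ S).card : ZMod 2) = 1 :=
            (zmod2_one_iff _).2 (Nat.not_even_iff_odd.1 hEv)
          rw [if_neg (by tauto)]
          have := hd
          rw [h0, h1] at this
          linear_combination -this
      · have h1 : ((cut {v} ∩ I).card : ZMod 2) = 0 := by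
          rw [hdI, if_neg (fun h => hvst (Or.inl h)), if_neg (fun h => hvst (Or.inr h))]; ring
        by_cases hEv : Even ((cut {v} ∩ S).card)
        · have h0 : ((cut {v} ∩ S).card : ZMod 2) = 0 := (zmod2_zero_iff _).2 hEv
          rw [if_neg (by tauto)]
          have := hd
          rw [h0, h1] at this
          linear_combination -this
        · have h0 : ((cut {v} ∩ S).card : ZMod 2) = 1 :=
            (zmod2_one_iff _).2 (Nat.not_even_iff_odd.1 hEv)
          rw [if_pos (by tauto)]
          have := hd
          rw [h0, h1] at this
          linear_combination -this
    rw [Finset.sum_congr rfl step]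
    have hUT : U ∩ Finset.univ.filter
        (fun v => (v = s ∨ v = t) ↔ Even ((cut {v} ∩ S).card)) =
        U.filter (fun v => (v = s ∨ v = t) ↔ Even ((cut {v} ∩ S).card)) := by
      ext v; simp [Finset.mem_filter]
    have : (∑ v ∈ U, (if (v = s ∨ v = t) ↔ Even ((cut {v} ∩ S).card) then (1 : ZMod 2) else 0))
        = ((U.filter (fun v => (v = s ∨ v = t) ↔ Even ((cut {v} ∩ S).card))).card : ZMod 2) := by
      rw [Finset.card_filter]
      push_cast
      rfl
    rw [this, ← hUT]
    exact (zmod2_one_iff _).2 hodd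
  have hJodd : Odd ((J ∩ cut U).card) := (zmod2_one_iff _).1 hJcut
  have hJ1 : 1 ≤ ((J ∩ cut U).card : ℝ) := by
    exact_mod_cast hJodd.pos
  -- decompose the sum
  have hsum : ∑ e ∈ cut U, (β * x e + (1 - 2*β) * (if e ∈ S \ I then 1 else 0) + z e)
      = β * (∑ e ∈ cut U, x e) + (1 - 2*β) * ((J ∩ cut U).card : ℝ)
        + ∑ e ∈ cut U, z e := by
    rw [Finset.sum_add_distrib, Finset.sum_add_distrib, ← Finset.mul_sum, ← Finset.mul_sum]
    congr 2
    rw [Finset.sum_ite_mem, Finset.inter_comm]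
    simp [hJ]
  rw [hsum]
  have hZ0 : 0 ≤ ∑ e ∈ cut U, z e := Finset.sum_nonneg (fun e _ => hz0 e)
  have hβ' : 0 ≤ 1 - 2*β := by linarith
  have hprod : (1 - 2*β) * 1 ≤ (1 - 2*β) * ((J ∩ cut U).card : ℝ) :=
    mul_le_mul_of_nonneg_left hJ1 hβ'
  by_cases hx2 : 2 ≤ ∑ e ∈ cut U, x e
  · have hXβ : β * 2 ≤ β * (∑ e ∈ cut U, x e) := mul_le_mul_of_nonneg_left hx2 hβ0
    linarith
  · push_neg at hx2
    have hstU : ¬((s ∈ U) ↔ (t ∈ U)) := fun h =>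
      absurd (heven U hUne hUuniv h) (not_le.2 hx2)
    have hIodd : Odd ((I ∩ cut U).card) := by
      apply (zmod2_one_iff _).1
      rw [hIcut U]
      by_cases hs : s ∈ U <;> by_cases ht : t ∈ U <;> simp [hs, ht] at hstU ⊢
    have hSeven : Even ((S ∩ cut U).card) := by
      rw [Finset.inter_comm S, hsplit, Finset.inter_comm _ I, Finset.inter_comm _ J]
      exact hIodd.add_odd hJodd
    have hzC := hz U hUne hUuniv hx2 hSeven
    linarith
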